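/- arXiv:math/0010239 — 4 statements merged into one kernel-verified Lean document; each statement's English description precedes it below -/
import Mathlib

section
/- In the Coxeter system of type G_2, every distinguished subexpression σ for 1 of the reduced word (1,2,1,2,1,2) satisfies |J(σ)| ≤ 2, where J(σ) = {j : σ_j ≠ σ_{j-1} and ℓ(σ_j) > ℓ(σ_{j-1})}. (This is the combinatorial content of the statement that every Deodhar stratum D_σ(h) of the intersection of opposed big cells in the G_2 flag variety has codimension at most 2.) -/
/-- The word `(1,2,1,2,1,2)` of type `G₂`, encoded with indices `0, 1 : Fin 2`. -/
def g2Word : Fin 6 → Fin 2 := ![0, 1, 0, 1, 0, 1]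

/-- `σ = (σ 0, …, σ 6)` is a distinguished subexpression for `1` of the word `(1,2,1,2,1,2)`:
`σ 0 = σ 6 = 1`, each `σ (j+1) ∈ {σ j, σ j * s (i (j+1))}`, and whenever right multiplication
by `s (i (j+1))` decreases the length of `σ j`, we have `σ (j+1) = σ j * s (i (j+1))`. -/
def IsDistSubexprOne {W : Type*} [Group W] (cs : CoxeterSystem CoxeterMatrix.G₂ W)
    (σ : Fin 7 → W) : Prop :=
  σ 0 = 1 ∧ σ 6 = 1 ∧
  (∀ j : Fin 6, σ j.succ = σ j.castSucc ∨
      σ j.succ = σ j.castSucc * cs.simple (g2Word j)) ∧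
  (∀ j : Fin 6, cs.length (σ j.castSucc * cs.simple (g2Word j)) < cs.length (σ j.castSucc) →
      σ j.succ = σ j.castSucc * cs.simple (g2Word j))

open scoped Classical in
/-- In the Coxeter system of type `G₂`, every distinguished subexpression `σ` for `1` of the
reduced word `(1,2,1,2,1,2)` satisfies `|J(σ)| ≤ 2`, where `J(σ)` is the set of steps at which
the length goes up. -/
theorem stmt_6 {W : Type*} [Group W] (cs : CoxeterSystem CoxeterMatrix.G₂ W)
    (σ : Fin 7 → W) (hσ : IsDistSubexprOne cs σ) :
    (Finset.univ.filter (fun j : Fin 6 =>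
        σ j.succ ≠ σ j.castSucc ∧
        cs.length (σ j.castSucc) < cs.length (σ j.succ))).card ≤ 2 := by
  obtain ⟨h0, h6, hstep, -⟩ := hσ
  set P : Fin 6 → Prop := fun j => σ j.succ ≠ σ j.castSucc ∧
      cs.length (σ j.castSucc) < cs.length (σ j.succ) with hP
  set D : Fin 6 → Prop := fun j => σ j.succ ≠ σ j.castSucc ∧
      cs.length (σ j.succ) < cs.length (σ j.castSucc) with hD
  have key : ∀ j : Fin 6, ((cs.length (σ j.succ) : ℤ) - (cs.length (σ j.castSucc) : ℤ))
      = (if P j then 1 else 0) - (if D j then 1 else 0) := by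
    intro j
    rcases hstep j with he | hm
    · have hp : ¬ P j := fun h => h.1 he
      have hd : ¬ D j := fun h => h.1 he
      rw [if_neg hp, if_neg hd, he]; ring
    · have hne' := cs.length_mul_simple_ne (σ j.castSucc) (g2Word j)
      have hne : σ j.succ ≠ σ j.castSucc := by
        rw [hm]; intro h; exact hne' (congrArg cs.length h)
      rcases cs.length_mul_simple (σ j.castSucc) (g2Word j) with h1 | h2
      · have hlt : cs.length (σ j.castSucc) < cs.length (σ j.succ) := by
          rw [hm, h1]; omega
        rw [if_pos ⟨hne, hlt⟩, if_neg (fun h => absurd hlt (by omega))]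
        rw [hm, h1]; push_cast; ring
      · have ha : cs.length (σ j.succ) + 1 = cs.length (σ j.castSucc) := by rw [hm]; exact h2
        have hlt : cs.length (σ j.succ) < cs.length (σ j.castSucc) := by omega
        rw [if_neg (fun h : P j => absurd h.2 (by omega)), if_pos (⟨hne, hlt⟩ : D j)]
        omega
  have hsum : ∑ j : Fin 6, ((cs.length (σ j.succ) : ℤ) - (cs.length (σ j.castSucc) : ℤ)) = 0 := by
    rw [Fin.sum_univ_six]
    rw [show (0:Fin 6).castSucc = 0 from rfl, show (0:Fin 6).succ = 1 from rfl,
      show (1:Fin 6).castSucc = 1 from rfl, show (1:Fin 6).succ = 2 from rfl,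
      show (2:Fin 6).castSucc = 2 from rfl, show (2:Fin 6).succ = 3 from rfl,
      show (3:Fin 6).castSucc = 3 from rfl, show (3:Fin 6).succ = 4 from rfl,
      show (4:Fin 6).castSucc = 4 from rfl, show (4:Fin 6).succ = 5 from rfl,
      show (5:Fin 6).castSucc = 5 from rfl, show (5:Fin 6).succ = 6 from rfl, h0, h6]
    ring
  rw [Finset.sum_congr rfl (fun j _ => key j), Finset.sum_sub_distrib,
    Finset.sum_boole, Finset.sum_boole] at hsum
  have hcard : (Finset.univ.filter P).card = (Finset.univ.filter D).card := by
    have := sub_eq_zero.mp hsum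
    have e1 : Finset.univ.filter (fun x => P x) = Finset.univ.filter P :=
      Finset.filter_congr (fun x _ => Iff.rfl)
    have e2 : Finset.univ.filter (fun x => D x) = Finset.univ.filter D :=
      Finset.filter_congr (fun x _ => Iff.rfl)
    rw [e1, e2] at this
    exact_mod_cast this
  suffices hgoal : (Finset.univ.filter P).card ≤ 2 by
    rwa [show Finset.univ.filter (fun j : Fin 6 =>
        σ j.succ ≠ σ j.castSucc ∧ cs.length (σ j.castSucc) < cs.length (σ j.succ))
      = Finset.univ.filter P from Finset.filter_congr (fun x _ => by rw [hP])]
  by_contra hc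
  push_neg at hc
  have hPD : ∀ j : Fin 6, P j ∨ D j := by
    by_contra hn
    push_neg at hn
    obtain ⟨j0, hj1, hj2⟩ := hn
    have hsub : Finset.univ.filter P ∪ Finset.univ.filter D ⊆ Finset.univ.erase j0 := by
      intro x hx
      simp only [Finset.mem_union, Finset.mem_filter, Finset.mem_univ, true_and] at hx
      refine Finset.mem_erase.mpr ⟨?_, Finset.mem_univ x⟩
      rintro rfl
      tauto
    have h1 : (Finset.univ.filter P ∪ Finset.univ.filter D).card ≤ 5 := by
      have := Finset.card_le_card hsub
      simpa [Finset.card_erase_of_mem] using this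
    have hdisj : Disjoint (Finset.univ.filter P) (Finset.univ.filter D) := by
      rw [Finset.disjoint_filter]
      intro x _ hx hx2
      exact absurd hx2.2 (by omega)
    rw [Finset.card_union_of_disjoint hdisj] at h1
    omega
  have hmul : ∀ j : Fin 6, σ j.succ = σ j.castSucc * cs.simple (g2Word j) := by
    intro j
    rcases hstep j with he | hm
    · rcases hPD j with h | h <;> exact absurd he h.1
    · exact hm
  have e1 := hmul 0; have e2 := hmul 1; have e3 := hmul 2
  have e4 := hmul 3; have e5 := hmul 4; have e6 := hmul 5
  rw [show (0:Fin 6).castSucc = 0 from rfl, show (0:Fin 6).succ = 1 from rfl, h0] at e1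
  rw [show (1:Fin 6).castSucc = 1 from rfl, show (1:Fin 6).succ = 2 from rfl, e1] at e2
  rw [show (2:Fin 6).castSucc = 2 from rfl, show (2:Fin 6).succ = 3 from rfl, e2] at e3
  rw [show (3:Fin 6).castSucc = 3 from rfl, show (3:Fin 6).succ = 4 from rfl, e3] at e4
  rw [show (4:Fin 6).castSucc = 4 from rfl, show (4:Fin 6).succ = 5 from rfl, e4] at e5
  rw [show (5:Fin 6).castSucc = 5 from rfl, show (5:Fin 6).succ = 6 from rfl, e5, h6] at e6
  have hf : CoxeterMatrix.IsLiftable CoxeterMatrix.G₂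
      (![DihedralGroup.sr 0, DihedralGroup.sr 1] : Fin 2 → DihedralGroup 6) := by
    unfold CoxeterMatrix.IsLiftable; decide
  have := congrArg (cs.lift ⟨_, hf⟩) e6.symm
  simp only [one_mul, map_mul, map_one, CoxeterSystem.lift_apply_simple] at this
  revert this
  rw [show g2Word 0 = 0 from rfl, show g2Word 1 = 1 from rfl, show g2Word 2 = 0 from rfl,
    show g2Word 3 = 1 from rfl, show g2Word 4 = 0 from rfl, show g2Word 5 = 1 from rfl]
  decide
end

section
/- Let a, b, c, d, e, f be negative real numbers. Set p_1 = e + c + a, p_2 = ed + eb + bc, and u = e²d³c + e²d³a + 3e²abd² + 3e²ab²d + e²ab³ + 3eab²cd + 2eab³c + ab³c². Then p_1, p_2, u, a, b c d² e, and d e f are all nonzero, and the six quantities a′ = 1/p_1, b′ = p_1/p_2, c′ = p_2³/(u p_1), d′ = u/(b c d² e p_2), e′ = e²d³c/(a u), f′ = ab/(def) are all negative. (This identifies the connected component B, consisting of the all-negative cell D⁺_{ĩ}(−,−,−,−,−,−), with the component 2 of the intersection of opposed big cells under the map ε.) -/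
/-- Chamber-ansatz sign computation for type G₂: if a, b, c, d, e, f are all negative, then the
denominators p₁, p₂, u, a, bcd²e, def are nonzero and the six chamber-ansatz outputs
a′, b′, c′, d′, e′, f′ are all negative (component B maps to component 2). -/
theorem stmt_9 (a b c d e f p₁ p₂ u : ℝ)
    (ha : a < 0) (hb : b < 0) (hc : c < 0) (hd : d < 0) (he : e < 0) (hf : f < 0)
    (hp₁ : p₁ = e + c + a) (hp₂ : p₂ = e * d + e * b + b * c)
    (hu : u = e ^ 2 * d ^ 3 * c + e ^ 2 * d ^ 3 * a + 3 * e ^ 2 * a * b * d ^ 2 +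
        3 * e ^ 2 * a * b ^ 2 * d + e ^ 2 * a * b ^ 3 + 3 * e * a * b ^ 2 * c * d +
        2 * e * a * b ^ 3 * c + a * b ^ 3 * c ^ 2) :
    p₁ ≠ 0 ∧ p₂ ≠ 0 ∧ u ≠ 0 ∧ a ≠ 0 ∧ b * c * d ^ 2 * e ≠ 0 ∧ d * e * f ≠ 0 ∧
    1 / p₁ < 0 ∧ p₁ / p₂ < 0 ∧ p₂ ^ 3 / (u * p₁) < 0 ∧ u / (b * c * d ^ 2 * e * p₂) < 0 ∧
    e ^ 2 * d ^ 3 * c / (a * u) < 0 ∧ a * b / (d * e * f) < 0 := by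
  have he2 : (0:ℝ) < e ^ 2 := by nlinarith
  have hb2 : (0:ℝ) < b ^ 2 := by nlinarith
  have hd2 : (0:ℝ) < d ^ 2 := by nlinarith
  have hd3 : d ^ 3 < 0 := by nlinarith [mul_pos hd2 (neg_pos.2 hd)]
  have hb3 : b ^ 3 < 0 := by nlinarith [mul_pos hb2 (neg_pos.2 hb)]
  have h1 : p₁ < 0 := by subst hp₁; linarith
  have h2 : p₂ > 0 := by
    subst hp₂
    have := mul_pos_of_neg_of_neg he hd
    have := mul_pos_of_neg_of_neg he hb
    have := mul_pos_of_neg_of_neg hb hc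
    linarith
  have t1 : e ^ 2 * d ^ 3 * c > 0 := by
    have h := mul_pos he2 (mul_pos_of_neg_of_neg hd3 hc)
    calc (0:ℝ) < _ := h
      _ = e ^ 2 * d ^ 3 * c := by ring
  have hc2 : (0:ℝ) < c ^ 2 := by nlinarith
  have t2 : e ^ 2 * d ^ 3 * a > 0 := by
    have h := mul_pos he2 (mul_pos_of_neg_of_neg hd3 ha)
    calc (0:ℝ) < _ := h
      _ = e ^ 2 * d ^ 3 * a := by ring
  have t3 : e ^ 2 * a * b * d ^ 2 > 0 := by
    have h := mul_pos (mul_pos he2 (mul_pos_of_neg_of_neg ha hb)) hd2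
    calc (0:ℝ) < _ := h
      _ = e ^ 2 * a * b * d ^ 2 := by ring
  have t4 : e ^ 2 * a * b ^ 2 * d > 0 := by
    have h := mul_pos he2 (mul_pos_of_neg_of_neg (mul_neg_of_neg_of_pos ha hb2) hd)
    calc (0:ℝ) < _ := h
      _ = e ^ 2 * a * b ^ 2 * d := by ring
  have t5 : e ^ 2 * a * b ^ 3 > 0 := by
    have h := mul_pos he2 (mul_pos_of_neg_of_neg ha hb3)
    calc (0:ℝ) < _ := h
      _ = e ^ 2 * a * b ^ 3 := by ring
  have t6 : e * a * b ^ 2 * c * d > 0 := by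
    have h := mul_pos (mul_pos (mul_pos_of_neg_of_neg he ha) hb2) (mul_pos_of_neg_of_neg hc hd)
    calc (0:ℝ) < _ := h
      _ = e * a * b ^ 2 * c * d := by ring
  have t7 : e * a * b ^ 3 * c > 0 := by
    have h := mul_pos (mul_pos_of_neg_of_neg he ha) (mul_pos_of_neg_of_neg hb3 hc)
    calc (0:ℝ) < _ := h
      _ = e * a * b ^ 3 * c := by ring
  have t8 : a * b ^ 3 * c ^ 2 > 0 := by
    have h := mul_pos (mul_pos_of_neg_of_neg ha hb3) hc2
    calc (0:ℝ) < _ := h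
      _ = a * b ^ 3 * c ^ 2 := by ring
  have hu3 : u > 0 := by subst hu; linarith
  have hden1 : b * c * d ^ 2 * e < 0 := by
    have h : b * c * d ^ 2 > 0 := mul_pos (mul_pos_of_neg_of_neg hb hc) hd2
    exact mul_neg_of_pos_of_neg h he
  have hden2 : d * e * f < 0 := by
    have : d * e > 0 := mul_pos_of_neg_of_neg hd he
    exact mul_neg_of_pos_of_neg this hf
  refine ⟨ne_of_lt h1, ne_of_gt h2, ne_of_gt hu3, ne_of_lt ha, ne_of_lt hden1, ne_of_lt hden2,
    ?_, ?_, ?_, ?_, ?_, ?_⟩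
  · exact div_neg_of_pos_of_neg one_pos h1
  · exact div_neg_of_neg_of_pos h1 h2
  · exact div_neg_of_pos_of_neg (by positivity) (mul_neg_of_pos_of_neg hu3 h1)
  · exact div_neg_of_pos_of_neg hu3 (mul_neg_of_neg_of_pos hden1 h2)
  · exact div_neg_of_pos_of_neg t1 (mul_neg_of_neg_of_pos ha hu3)
  · exact div_neg_of_pos_of_neg (mul_pos_of_neg_of_neg ha hb) hden2
end

section
/- Let a, b, c, d, e, f be real numbers with a < 0, b > 0, c < 0, d > 0, e < 0, f > 0. Set p_1 = e + c + a, p_2 = ed + eb + bc, and u = e²d³c + e²d³a + 3e²abd² + 3e²ab²d + e²ab³ + 3eab²cd + 2eab³c + ab³c². Then p_1, p_2, u, a, b c d² e, and d e f are all nonzero, and the quantities a′ = 1/p_1, b′ = p_1/p_2, c′ = p_2³/(u p_1), d′ = u/(b c d² e p_2), e′ = e²d³c/(a u), f′ = ab/(def) satisfy a′ < 0, b′ > 0, c′ < 0, d′ > 0, e′ < 0, f′ > 0. (This identifies the connected component C, consisting of the alternating-sign cell D⁺_{ĩ}(−,+,−,+,−,+), with the component 3 of the intersection of opposed big cells under the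 map ε.) -/
set_option maxHeartbeats 1000000


/-- Chamber-ansatz sign computation for type G₂: if the signs of a, b, c, d, e, f alternate as
(−,+,−,+,−,+), then the denominators p₁, p₂, u, a, bcd²e, def are nonzero and the six
chamber-ansatz outputs have signs (−,+,−,+,−,+) (component C maps to component 3). -/
theorem stmt_10 (a b c d e f p₁ p₂ u : ℝ)
    (ha : a < 0) (hb : 0 < b) (hc : c < 0) (hd : 0 < d) (he : e < 0) (hf : 0 < f)
    (hp₁ : p₁ = e + c + a) (hp₂ : p₂ = e * d + e * b + b * c)
    (hu : u = e ^ 2 * d ^ 3 * c + e ^ 2 * d ^ 3 * a + 3 * e ^ 2 * a * b * d ^ 2 +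
        3 * e ^ 2 * a * b ^ 2 * d + e ^ 2 * a * b ^ 3 + 3 * e * a * b ^ 2 * c * d +
        2 * e * a * b ^ 3 * c + a * b ^ 3 * c ^ 2) :
    p₁ ≠ 0 ∧ p₂ ≠ 0 ∧ u ≠ 0 ∧ a ≠ 0 ∧ b * c * d ^ 2 * e ≠ 0 ∧ d * e * f ≠ 0 ∧
    1 / p₁ < 0 ∧ 0 < p₁ / p₂ ∧ p₂ ^ 3 / (u * p₁) < 0 ∧ 0 < u / (b * c * d ^ 2 * e * p₂) ∧
    e ^ 2 * d ^ 3 * c / (a * u) < 0 ∧ 0 < a * b / (d * e * f) := by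
  have he2 : 0 < e ^ 2 := by nlinarith
  have hd3 : 0 < d ^ 3 := by positivity
  have hea : 0 < e * a := mul_pos_of_neg_of_neg he ha
  have hac : 0 < a * c := mul_pos_of_neg_of_neg ha hc
  have h1 : p₁ < 0 := by rw [hp₁]; linarith
  have h2 : p₂ < 0 := by
    rw [hp₂]
    have := mul_neg_of_neg_of_pos he hd
    have := mul_neg_of_neg_of_pos he hb
    have := mul_neg_of_pos_of_neg hb hc
    linarith
  have h3 : u < 0 := by
    rw [hu]
    have t1 : e ^ 2 * d ^ 3 * c < 0 := mul_neg_of_pos_of_neg (by positivity) hc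
    have t2 : e ^ 2 * d ^ 3 * a < 0 := mul_neg_of_pos_of_neg (by positivity) ha
    have t3 : 3 * e ^ 2 * a * b * d ^ 2 < 0 := by nlinarith [mul_pos he2 (mul_pos hb (by positivity : (0:ℝ) < d ^ 2))]
    have t4 : 3 * e ^ 2 * a * b ^ 2 * d < 0 := by nlinarith [mul_pos he2 (mul_pos (by positivity : (0:ℝ) < b ^ 2) hd)]
    have t5 : e ^ 2 * a * b ^ 3 < 0 := by nlinarith [mul_pos he2 (by positivity : (0:ℝ) < b ^ 3)]
    have t6 : 3 * e * a * b ^ 2 * c * d < 0 := by nlinarith [mul_pos (mul_pos hea (by positivity : (0:ℝ) < b ^ 2)) hd]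
    have t7 : 2 * e * a * b ^ 3 * c < 0 := by nlinarith [mul_pos hea (by positivity : (0:ℝ) < b ^ 3)]
    have t8 : a * b ^ 3 * c ^ 2 < 0 := by nlinarith [mul_pos (by positivity : (0:ℝ) < b ^ 3) (mul_pos_of_neg_of_neg hc hc)]
    linarith
  have hbcde : 0 < b * c * d ^ 2 * e := by nlinarith [mul_pos (mul_pos hb (by positivity : (0:ℝ) < d ^ 2)) (mul_pos_of_neg_of_neg hc he)]
  have hdef : d * e * f < 0 := by nlinarith [mul_pos hd hf]
  refine ⟨ne_of_lt h1, ne_of_lt h2, ne_of_lt h3, ne_of_lt ha, ne_of_gt hbcde, ne_of_lt hdef,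
    div_neg_of_pos_of_neg one_pos h1, div_pos_of_neg_of_neg h1 h2, ?_, ?_, ?_, ?_⟩
  · exact div_neg_of_neg_of_pos (Odd.pow_neg (by decide) h2) (mul_pos_of_neg_of_neg h3 h1)
  · exact div_pos_of_neg_of_neg h3 (mul_neg_of_pos_of_neg hbcde h2)
  · exact div_neg_of_neg_of_pos (mul_neg_of_pos_of_neg (by positivity) hc) (mul_pos_of_neg_of_neg ha h3)
  · exact div_pos_of_neg_of_neg (mul_neg_of_neg_of_pos ha hb) hdef
end

section
/- Let a, b, c, d, e, f be real numbers with a > 0, b < 0, c > 0, d < 0, e > 0, f < 0. Set p_1 = e + c + a, p_2 = ed + eb + bc, and u = e²d³c + e²d³a + 3e²abd² + 3e²ab²d + e²ab³ + 3eab²cd + 2eab³c + ab³c². Then p_1, p_2, u, a, b c d² e, and d e f are all nonzero, and the quantities a′ = 1/p_1, b′ = p_1/p_2, c′ = p_2³/(u p_1), d′ = u/(b c d² e p_2), e′ = e²d³c/(a u), f′ = ab/(def) satisfy a′ > 0, b′ < 0, c′ > 0, d′ < 0, e′ > 0, f′ < 0. (This identifies the connected component D, consisting of the alternating-sign cell D⁺_{ĩ}(+,−,+,−,+,−),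 with the component 4 of the intersection of opposed big cells under the map ε.) -/
/-- Chamber-ansatz sign computation for type G₂: if the signs of a, b, c, d, e, f alternate as
(+,−,+,−,+,−), then the denominators p₁, p₂, u, a, bcd²e, def are nonzero and the six
chamber-ansatz outputs have signs (+,−,+,−,+,−) (component D maps to component 4). -/
theorem stmt_11 (a b c d e f p₁ p₂ u : ℝ)
    (ha : 0 < a) (hb : b < 0) (hc : 0 < c) (hd : d < 0) (he : 0 < e) (hf : f < 0)
    (hp₁ : p₁ = e + c + a) (hp₂ : p₂ = e * d + e * b + b * c)
    (hu : u = e ^ 2 * d ^ 3 * c + e ^ 2 * d ^ 3 * a + 3 * e ^ 2 * a * b * d ^ 2 +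
        3 * e ^ 2 * a * b ^ 2 * d + e ^ 2 * a * b ^ 3 + 3 * e * a * b ^ 2 * c * d +
        2 * e * a * b ^ 3 * c + a * b ^ 3 * c ^ 2) :
    p₁ ≠ 0 ∧ p₂ ≠ 0 ∧ u ≠ 0 ∧ a ≠ 0 ∧ b * c * d ^ 2 * e ≠ 0 ∧ d * e * f ≠ 0 ∧
    0 < 1 / p₁ ∧ p₁ / p₂ < 0 ∧ 0 < p₂ ^ 3 / (u * p₁) ∧ u / (b * c * d ^ 2 * e * p₂) < 0 ∧
    0 < e ^ 2 * d ^ 3 * c / (a * u) ∧ a * b / (d * e * f) < 0 := by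
  have h1 : 0 < p₁ := by rw [hp₁]; positivity
  have h2 : p₂ < 0 := by nlinarith [mul_pos he hc]
  have hu' : u < 0 := by
    rw [hu]
    have hb2 : 0 < b ^ 2 := by nlinarith
    have hd2 : 0 < d ^ 2 := by nlinarith
    nlinarith [mul_pos (mul_pos he he) hc, mul_pos (mul_pos he he) ha,
      mul_pos (mul_pos (mul_pos he he) ha) hd2,
      mul_pos (mul_pos (mul_pos he he) ha) hb2,
      mul_pos (mul_pos (mul_pos (mul_pos he ha) hb2) hc) (neg_pos.2 hd),
      mul_pos (mul_pos (mul_pos he ha) hb2) hc,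
      mul_pos (mul_pos ha hb2) (mul_pos hc hc),
      mul_pos hd2 (neg_pos.2 hd)]
  have hbcde : b * c * d ^ 2 * e < 0 := by
    have hd2 : 0 < d ^ 2 := by nlinarith
    have : 0 < c * d ^ 2 * e := mul_pos (mul_pos hc hd2) he
    nlinarith
  have hdef : 0 < d * e * f := by nlinarith [mul_pos he (neg_pos.2 hf)]
  refine ⟨h1.ne', h2.ne, hu'.ne, ha.ne', hbcde.ne, hdef.ne', one_div_pos.2 h1,
    div_neg_of_pos_of_neg h1 h2, ?_, ?_, ?_, ?_⟩
  · exact div_pos_of_neg_of_neg (Odd.pow_neg (by decide) h2) (mul_neg_of_neg_of_pos hu' h1)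
  · exact div_neg_of_neg_of_pos hu' (mul_pos_of_neg_of_neg hbcde h2)
  · have h3 : e ^ 2 * d ^ 3 * c < 0 := by
      have hd2 : 0 < d ^ 2 := by nlinarith
      have : 0 < e ^ 2 * d ^ 2 * c := by positivity
      nlinarith
    exact div_pos_of_neg_of_neg h3 (by nlinarith)
  · exact div_neg_of_neg_of_pos (by nlinarith) hdef
end
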